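/- Let a_n denote the coefficient of x^n in the power series expansion of P(x) = (1+x^3)/((1−x^2)(1−x^3)). Then a_n = n/3 + 1 if n ≡ 0 mod 3, a_n = ⌊n/3⌋ if n ≡ 1 mod 3, and a_n = ⌈n/3⌉ if n ≡ 2 mod 3. -/

import Mathlib

open PowerSeries

noncomputable def fQ13 (n : ℕ) : ℚ :=
  ((n : ℚ) + if n % 3 = 0 then 3 else if n % 3 = 1 then -1 else 1) / 3

lemma fQ13_rec (m : ℕ) :
    fQ13 (m + 5) - fQ13 (m + 3) - fQ13 (m + 2) + fQ13 m = 0 := by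
  have h3 : m % 3 = 0 ∨ m % 3 = 1 ∨ m % 3 = 2 := by omega
  rcases h3 with h | h | h <;>
  · have h5 : (m + 5) % 3 = (m + 2) % 3 := by omega
    have h2 : (m + 2) % 3 = (m + 2) % 3 := rfl
    have hm3 : (m + 3) % 3 = m % 3 := by omega
    have hm2 : (m + 2) % 3 = (m % 3 + 2) % 3 := by omega
    simp only [fQ13, h5, hm3, hm2, h]
    norm_num
    ring

lemma key13 (P : PowerSeries ℚ)
    (hP : P * ((1 - PowerSeries.X ^ 2) * (1 - PowerSeries.X ^ 3)) = 1 + PowerSeries.X ^ 3) :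
    P = PowerSeries.mk fQ13 := by
  have hM : ((1 - X ^ 2) * (1 - X ^ 3) : PowerSeries ℚ) ≠ 0 := by
    intro h
    have := congrArg (PowerSeries.constantCoeff (R := ℚ)) h
    simp at this
  have hQ : (PowerSeries.mk fQ13) * ((1 - X ^ 2) * (1 - X ^ 3)) = 1 + X ^ 3 := by
    have expand : ((1 - X ^ 2) * (1 - X ^ 3) : PowerSeries ℚ)
        = 1 - X ^ 2 - X ^ 3 + X ^ 5 := by ring
    rw [expand]
    ext n
    have hdist : (PowerSeries.mk fQ13) * (1 - X ^ 2 - X ^ 3 + X ^ 5)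
        = PowerSeries.mk fQ13 - PowerSeries.mk fQ13 * X ^ 2
          - PowerSeries.mk fQ13 * X ^ 3 + PowerSeries.mk fQ13 * X ^ 5 := by ring
    rw [hdist]
    simp only [map_add, map_sub, PowerSeries.coeff_mul_X_pow', PowerSeries.coeff_mk,
      PowerSeries.coeff_one, PowerSeries.coeff_X_pow]
    rcases Nat.lt_or_ge n 5 with hn | hn
    · interval_cases n <;> norm_num [fQ13]
    · obtain ⟨m, rfl⟩ : ∃ m, n = m + 5 := ⟨n - 5, by omega⟩
      have e2 : m + 5 - 2 = m + 3 := by omega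
      have e3 : m + 5 - 3 = m + 2 := by omega
      have e5 : m + 5 - 5 = m := by omega
      rw [if_pos (by omega : 2 ≤ m + 5), if_pos (by omega : 3 ≤ m + 5),
        if_pos (by omega : 5 ≤ m + 5), if_neg (by omega : ¬ m + 5 = 0),
        if_neg (by omega : ¬ m + 5 = 3), e2, e3, e5]
      have := fQ13_rec m
      linarith
  exact mul_right_cancel₀ hM (hP.trans hQ.symm)

/-- Let `a_n` be the coefficient of `x^n` in the power series expansion
of `P(x) = (1+x^3)/((1−x^2)(1−x^3))` (characterised by
`P · (1−x^2)(1−x^3) = 1+x^3`). Then `a_n = n/3 + 1` if `n ≡ 0 mod 3`,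
`a_n = ⌊n/3⌋` if `n ≡ 1 mod 3`, and `a_n = ⌈n/3⌉` if `n ≡ 2 mod 3`. -/
theorem stmt13 (P : PowerSeries ℚ)
    (hP : P * ((1 - PowerSeries.X ^ 2) * (1 - PowerSeries.X ^ 3)) = 1 + PowerSeries.X ^ 3) :
    ∀ n : ℕ,
      (n % 3 = 0 → PowerSeries.coeff n P = (n / 3 : ℕ) + 1) ∧
      (n % 3 = 1 → PowerSeries.coeff n P = ⌊(n : ℚ) / 3⌋) ∧
      (n % 3 = 2 → PowerSeries.coeff n P = ⌈(n : ℚ) / 3⌉) := by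
  intro n
  rw [key13 P hP, PowerSeries.coeff_mk]
  refine ⟨?_, ?_, ?_⟩
  · intro h
    obtain ⟨k, rfl⟩ : ∃ k, n = 3 * k := ⟨n / 3, by omega⟩
    have : 3 * k / 3 = k := by omega
    rw [this]
    simp only [fQ13, h]
    push_cast
    ring
  · intro h
    obtain ⟨k, rfl⟩ : ∃ k, n = 3 * k + 1 := ⟨n / 3, by omega⟩
    have hf : ⌊((3 * k + 1 : ℕ) : ℚ) / 3⌋ = (k : ℤ) := by
      rw [Int.floor_eq_iff]
      constructor <;> push_cast <;> [linarith; linarith]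
    rw [hf]
    simp only [fQ13, h]
    norm_num
  · intro h
    obtain ⟨k, rfl⟩ : ∃ k, n = 3 * k + 2 := ⟨n / 3, by omega⟩
    have hc : ⌈((3 * k + 2 : ℕ) : ℚ) / 3⌉ = (k : ℤ) + 1 := by
      rw [Int.ceil_eq_iff]
      constructor <;> push_cast <;> [linarith; linarith]
    rw [hc]
    simp only [fQ13, h]
    norm_num
    ring
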